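/- In the constructed instance for sacrificing return for less volatility, a subset T ⊆ {1,…,m} with |T| = k meets the performance bound if and only if T ⊆ {1,…,n} (i.e., T consists of exactly k coding rows) and for every coding column t with P < t ≤ f there exists i ∈ T with S_{i,t} = v₂. -/

import Mathlib

/-- Price-weighted index of the set of stocks `T` at time `t`,
given prices `Sp`. -/
noncomputable def phi1 (Sp : ℕ → ℕ → ℝ) (T : Finset ℕ) (t : ℕ) : ℝ :=
  (∑ i ∈ T, Sp i t) / T.card

/-- One-period return of the set of stocks `T` at time `t ≥ 1`. -/
noncomputable def ret (Sp : ℕ → ℕ → ℝ) (T : Finset ℕ) (t : ℕ) : ℝ :=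
  Real.log (phi1 Sp T t / phi1 Sp T (t - 1))

/-- Average return of the set of stocks `T` up to time `t ≥ 1`. -/
noncomputable def avgRet (Sp : ℕ → ℕ → ℝ) (T : Finset ℕ) (t : ℕ) : ℝ :=
  (∑ i ∈ Finset.Icc 1 t, ret Sp T i) / t

/-- Volatility of the set of stocks `T` up to time `t ≥ 2`. -/
noncomputable def vol (Sp : ℕ → ℕ → ℝ) (T : Finset ℕ) (t : ℕ) : ℝ :=
  Real.sqrt ((∑ i ∈ Finset.Icc 1 t, (ret Sp T i - avgRet Sp T t) ^ 2) /
    ((t : ℝ) - 1))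

theorem stmt_6
    -- the minimum-cover instance
    (s n K : ℕ) (hs : 1 ≤ s) (C : ℕ → Finset ℕ)
    (hC : ∀ i ∈ Finset.Icc 1 n, C i ⊆ Finset.Icc 1 s)
    (hK2 : 2 ≤ K) (hKn : K < n)
    -- the performance and volatility parameters
    (α β : ℝ) (hα : 0 < α) (hβ : 0 < β)
    -- constants of the construction
    (k P q B m f : ℕ) (hk : k = K)
    (hP : P = max (2 * (k + 1)) (2 * s))
    (hq : (q : ℤ) = ⌈max (1 + 4 / β) (Real.log (2 / α) / Real.log k)⌉)
    (hB : (B : ℤ) = ⌈α * (k : ℝ) ^ q⌉)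
    (hm : m = n * B) (hf : f = P + s)
    (v₁ v₂ : ℝ) (hv₁ : v₁ = (B : ℝ) - 1) (hv₂ : v₂ = (k : ℝ) * ((B : ℝ) - 1))
    -- the constructed prices
    (Sp : ℕ → ℕ → ℝ)
    (h0 : ∀ i ∈ Finset.Icc 1 m, Sp i 0 = v₁)
    (hpad1 : ∀ t, 1 ≤ t → t ≤ P → ∀ i ∈ Finset.Icc 1 n, Sp i t = v₁)
    (hpadEven : ∀ t, 1 ≤ t → t ≤ P → t % 2 = 0 →
      Sp (min (n + t / 2) m) t =
        ((m : ℝ) - n) * ((⌊(B : ℝ) / α⌋ : ℤ) - 1) ∧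
      ∀ i, n < i → i ≤ m → i ≠ min (n + t / 2) m → Sp i t = 0)
    (hpadOdd : ∀ t, 1 ≤ t → t ≤ P → t % 2 = 1 →
      ∀ i, n < i → i ≤ m → Sp i t = 0)
    (hcode : ∀ t, P < t → t ≤ f →
      (∀ i ∈ Finset.Icc 1 n, Sp i t = if t - P ∈ C i then v₂ else 0) ∧
      (∀ i, n < i → i < m → Sp i t = 0) ∧
      Sp m t = ((m : ℝ) - n) * ((⌊(B : ℝ) / α⌋ : ℤ) - (k : ℝ)) +
        (((Finset.Icc 1 n).filter (fun i => t - P ∉ C i)).card : ℝ) * v₂) :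
    -- statement 6
    ∀ T ⊆ Finset.Icc 1 m, T.card = k →
      ((∀ t ∈ Finset.Icc 1 f,
          phi1 Sp T t / phi1 Sp T 0 ≥
            α * (phi1 Sp (Finset.Icc 1 m) t / phi1 Sp (Finset.Icc 1 m) 0)) ↔
        (T ⊆ Finset.Icc 1 n ∧
          ∀ t, P < t → t ≤ f → ∃ i ∈ T, Sp i t = v₂)) := by

  intro T hTm hTk
  classical
  set F : ℤ := ⌊(B : ℝ) / α⌋ with hFdef
  -- basic numerics
  have hk2 : 2 ≤ k := hk ▸ hK2
  have hkn : k < n := hk ▸ hKn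
  have hkR : (2:ℝ) ≤ (k:ℝ) := by exact_mod_cast hk2
  have hkRpos : (0:ℝ) < (k:ℝ) := by linarith
  have hkne : (k:ℝ) ≠ 0 := hkRpos.ne'
  have hq2 : 2 ≤ q := by
    have h1 : (1:ℝ) < max (1 + 4 / β) (Real.log (2 / α) / Real.log k) := by
      have h4 : 0 < 4 / β := by positivity
      exact lt_of_lt_of_le (by linarith) (le_max_left _ _)
    have h2 : (1:ℤ) < (q:ℤ) := by
      rw [hq]; exact Int.lt_ceil.mpr (by push_cast; exact h1)
    exact_mod_cast h2
  -- k^q lower bounds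
  have hkqk : (k:ℝ) ≤ (k:ℝ) ^ q := by
    calc (k:ℝ) = (k:ℝ) ^ 1 := (pow_one _).symm
      _ ≤ (k:ℝ) ^ q := pow_le_pow_right₀ (by linarith) (by omega)
  have hkq1 : (1:ℝ) ≤ (k:ℝ) ^ q := le_trans (by linarith) hkqk
  -- log bound : 2/α ≤ k^q
  have hlogk : 0 < Real.log k := Real.log_pos (by linarith)
  have hqlog : Real.log (2 / α) / Real.log k ≤ (q:ℝ) := by
    have h := Int.le_ceil (max (1 + 4 / β) (Real.log (2 / α) / Real.log k))
    rw [← hq] at h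
    push_cast at h
    exact le_trans (le_max_right _ _) h
  have hkq2a : 2 / α ≤ (k:ℝ) ^ q := by
    have h1 : Real.log (2 / α) ≤ (q:ℝ) * Real.log k := by
      rw [div_le_iff₀ hlogk] at hqlog; exact hqlog
    have h2 : (0:ℝ) < 2 / α := by positivity
    have h3 : (0:ℝ) < (k:ℝ) ^ q := by positivity
    calc 2 / α = Real.exp (Real.log (2 / α)) := (Real.exp_log h2).symm
      _ ≤ Real.exp ((q:ℝ) * Real.log k) := Real.exp_le_exp.mpr h1
      _ = (k:ℝ) ^ q := by rw [← Real.log_pow, Real.exp_log h3]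
  have hBge : α * (k:ℝ) ^ q ≤ (B:ℝ) := by
    have h := Int.le_ceil (α * (k:ℝ) ^ q)
    rw [← hB] at h
    exact_mod_cast h
  have hB2 : (2:ℝ) ≤ (B:ℝ) := by
    have h1 : α * (2 / α) ≤ α * (k:ℝ) ^ q := mul_le_mul_of_nonneg_left hkq2a hα.le
    have h2 : α * (2 / α) = 2 := by field_simp
    linarith
  have hαk : α * (k:ℝ) ≤ (B:ℝ) :=
    le_trans (mul_le_mul_of_nonneg_left hkqk hα.le) hBge
  have hαB : α ≤ (B:ℝ) := by
    have h := mul_le_mul_of_nonneg_left hkq1 hα.le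
    rw [mul_one] at h
    exact le_trans h hBge
  have hv1pos : 0 < v₁ := by rw [hv₁]; linarith
  have hBpos : (0:ℝ) < (B:ℝ) := by linarith
  have hv2pos : 0 < v₂ := by
    rw [hv₂]; exact mul_pos hkRpos (by linarith)
  -- floor facts
  have hF1 : (1:ℝ) ≤ (F:ℝ) := by
    have h1 : (1:ℝ) ≤ (B:ℝ) / α := (one_le_div hα).mpr hαB
    have h2 : (1:ℤ) ≤ F := Int.le_floor.mpr (by push_cast; exact h1)
    exact_mod_cast h2
  have hFpos : (0:ℝ) < (F:ℝ) := by linarith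
  have hαF : α * (F:ℝ) ≤ (B:ℝ) := by
    have h := Int.floor_le ((B:ℝ) / α)
    rw [← hFdef] at h
    have h2 : α * (F:ℝ) ≤ α * ((B:ℝ) / α) := mul_le_mul_of_nonneg_left h hα.le
    have h3 : α * ((B:ℝ) / α) = (B:ℝ) := by field_simp
    linarith
  have hkey : ((k:ℝ) - 1) * (B:ℝ) < α * (k:ℝ) * (F:ℝ) := by
    have h := Int.sub_one_lt_floor ((B:ℝ) / α)
    rw [← hFdef] at h
    have h1 : α * (k:ℝ) * ((B:ℝ) / α - 1) < α * (k:ℝ) * (F:ℝ) :=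
      mul_lt_mul_of_pos_left h (by positivity)
    have h2 : α * (k:ℝ) * ((B:ℝ) / α - 1) = (k:ℝ) * (B:ℝ) - α * (k:ℝ) := by
      field_simp
    linarith
  -- nat facts
  have hBnat : 2 ≤ B := by exact_mod_cast hB2
  have hmge : n * 2 ≤ m := by rw [hm]; exact Nat.mul_le_mul_left n hBnat
  have hnk1m : n + k + 1 ≤ m := by omega
  have hmn : n < m := by omega
  have hnpos : 0 < n := by omega
  have hmpos : 0 < m := by omega
  have hmR : (m:ℝ) = (n:ℝ) * (B:ℝ) := by rw [hm]; push_cast; ring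
  have hmnv : (m:ℝ) - (n:ℝ) = (n:ℝ) * v₁ := by rw [hmR, hv₁]; ring
  have hnne : (n:ℝ) ≠ 0 := by positivity
  have hdivm : ∀ x : ℝ, (n:ℝ) * x / (m:ℝ) = x / (B:ℝ) := by
    intro x
    rw [hmR]
    field_simp
  have hmne : (m:ℝ) ≠ 0 := by
    rw [hmR]; positivity
  -- cards
  have hMcard : (Finset.Icc 1 m).card = m := by rw [Nat.card_Icc]; omega
  have hP1 : 2 * (k + 1) ≤ P := by rw [hP]; exact le_max_left _ _
  have hPf : P ≤ f := by omega
  -- phi at time 0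
  have hΦT0 : phi1 Sp T 0 = v₁ := by
    unfold phi1
    rw [Finset.sum_congr rfl (fun i hi => h0 i (hTm hi)), Finset.sum_const, hTk,
      nsmul_eq_mul, mul_div_cancel_left₀ v₁ hkne]
  have hΦM0 : phi1 Sp (Finset.Icc 1 m) 0 = v₁ := by
    unfold phi1
    rw [Finset.sum_congr rfl (fun i hi => h0 i hi), Finset.sum_const, hMcard,
      nsmul_eq_mul, mul_div_cancel_left₀ v₁ hmne]
  -- splitting sums over the market
  have hsplit : ∀ g : ℕ → ℝ, ∑ i ∈ Finset.Icc 1 m, g i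
      = (∑ i ∈ Finset.Icc 1 n, g i) + ∑ i ∈ Finset.Ioc n m, g i := by
    intro g
    rw [show Finset.Icc 1 m = Finset.Ioc 0 m from by rw [← Finset.Icc_add_one_left_eq_Ioc]; rfl,
      show Finset.Icc 1 n = Finset.Ioc 0 n from by rw [← Finset.Icc_add_one_left_eq_Ioc]; rfl,
      Finset.sum_Ioc_consecutive g (Nat.zero_le n) hmn.le]
  have hNcard : (Finset.Icc 1 n).card = n := by rw [Nat.card_Icc]; omega
  -- market index at odd padding columns
  have hΦModd : ∀ t, 1 ≤ t → t ≤ P → t % 2 = 1 →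
      phi1 Sp (Finset.Icc 1 m) t = v₁ / (B:ℝ) := by
    intro t h1 h2 h3
    unfold phi1
    rw [hMcard, hsplit,
      Finset.sum_congr rfl (fun i hi => hpad1 t h1 h2 i hi),
      Finset.sum_eq_zero (fun i hi => hpadOdd t h1 h2 h3 i (Finset.mem_Ioc.mp hi).1
        (Finset.mem_Ioc.mp hi).2),
      Finset.sum_const, hNcard, nsmul_eq_mul, add_zero]
    exact hdivm v₁
  -- market index at even padding columns
  have hΦMeven : ∀ t, 1 ≤ t → t ≤ P → t % 2 = 0 →
      phi1 Sp (Finset.Icc 1 m) t = v₁ * (F:ℝ) / (B:ℝ) := by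
    intro t h1 h2 h3
    obtain ⟨hA, hz⟩ := hpadEven t h1 h2 h3
    have hrIoc : min (n + t / 2) m ∈ Finset.Ioc n m := by
      rw [Finset.mem_Ioc]
      refine ⟨?_, min_le_right _ _⟩
      rcases min_cases (n + t / 2) m with ⟨h, _⟩ | ⟨h, _⟩ <;> rw [h] <;> omega
    unfold phi1
    rw [hMcard, hsplit,
      Finset.sum_congr rfl (fun i hi => hpad1 t h1 h2 i hi),
      Finset.sum_eq_single_of_mem _ hrIoc (fun i hi hne => hz i (Finset.mem_Ioc.mp hi).1
        (Finset.mem_Ioc.mp hi).2 hne),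
      Finset.sum_const, hNcard, nsmul_eq_mul, hA, hmnv]
    rw [← hdivm (v₁ * (F:ℝ))]
    congr 1
    ring
  -- market index at coding columns
  have hΦMcode : ∀ t, P < t → t ≤ f →
      phi1 Sp (Finset.Icc 1 m) t = v₁ * (F:ℝ) / (B:ℝ) := by
    intro t h1 h2
    obtain ⟨hcr, hzr, hmr⟩ := hcode t h1 h2
    unfold phi1
    have hmIoc : m ∈ Finset.Ioc n m := Finset.mem_Ioc.mpr ⟨hmn, le_rfl⟩
    rw [hMcard, hsplit,
      Finset.sum_eq_single_of_mem _ hmIoc (fun i hi hne => hzr i (Finset.mem_Ioc.mp hi).1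
        (lt_of_le_of_ne (Finset.mem_Ioc.mp hi).2 hne)),
      Finset.sum_congr rfl (fun i hi => hcr i hi),
      ← Finset.sum_filter, Finset.sum_const, nsmul_eq_mul, hmr, hmnv]
    have hcz : (((Finset.Icc 1 n).filter (fun i => t - P ∈ C i)).card : ℝ)
        + (((Finset.Icc 1 n).filter (fun i => t - P ∉ C i)).card : ℝ) = (n:ℝ) := by
      have h := Finset.card_filter_add_card_filter_not
        (s := Finset.Icc 1 n) (p := fun i => t - P ∈ C i)
      rw [hNcard] at h
      exact_mod_cast h
    rw [← hdivm (v₁ * (F:ℝ))]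
    congr 1
    linear_combination v₂ * hcz + (n:ℝ) * hv₂ - (n:ℝ) * (k:ℝ) * hv₁
  -- portfolio index at padding columns when T consists of coding rows
  have hΦTpad : T ⊆ Finset.Icc 1 n → ∀ t, 1 ≤ t → t ≤ P → phi1 Sp T t = v₁ := by
    intro hTn t h1 h2
    unfold phi1
    rw [Finset.sum_congr rfl (fun i hi => hpad1 t h1 h2 i (hTn hi)), Finset.sum_const,
      hTk, nsmul_eq_mul, mul_div_cancel_left₀ v₁ hkne]
  -- ratio reformulation
  have hratio : ∀ x y : ℝ, (x / v₁ ≥ α * (y / v₁)) ↔ α * y ≤ x := by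
    intro x y
    rw [ge_iff_le, ← mul_div_assoc, div_le_div_iff₀ hv1pos hv1pos,
      mul_le_mul_iff_of_pos_right hv1pos]
  -- the key upper bound α * (v₁ * F / B) ≤ v₁
  have hkeyF : α * (v₁ * (F:ℝ) / (B:ℝ)) ≤ v₁ := by
    have h1 : α * (F:ℝ) / (B:ℝ) ≤ 1 := (div_le_one hBpos).mpr hαF
    calc α * (v₁ * (F:ℝ) / (B:ℝ)) = v₁ * (α * (F:ℝ) / (B:ℝ)) := by ring
      _ ≤ v₁ * 1 := mul_le_mul_of_nonneg_left h1 hv1pos.le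
      _ = v₁ := mul_one v₁
  have hkey1 : α * (v₁ / (B:ℝ)) ≤ v₁ := by
    have h1 : α / (B:ℝ) ≤ 1 := (div_le_one hBpos).mpr hαB
    calc α * (v₁ / (B:ℝ)) = v₁ * (α / (B:ℝ)) := by ring
      _ ≤ v₁ * 1 := mul_le_mul_of_nonneg_left h1 hv1pos.le
      _ = v₁ := mul_one v₁
  constructor
  · -- forward direction
    intro hperf
    have hperf' : ∀ t ∈ Finset.Icc 1 f,
        α * phi1 Sp (Finset.Icc 1 m) t ≤ phi1 Sp T t := by
      intro t ht
      have hp := hperf t ht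
      rw [hΦT0, hΦM0] at hp
      exact (hratio _ _).mp hp
    have hTn : T ⊆ Finset.Icc 1 n := by
      by_contra hnot
      obtain ⟨i₀, hi₀T, hi₀n⟩ := Finset.not_subset.mp hnot
      have hi₀m := Finset.mem_Icc.mp (hTm hi₀T)
      rw [Finset.mem_Icc] at hi₀n
      have hi₀ : n < i₀ := by omega
      -- find an even padding column whose adjustment row avoids T
      have hnsub : ¬ (Finset.Icc (n + 1) (n + k + 1) ⊆ T) := by
        intro hsub
        have h := Finset.card_le_card hsub
        rw [Nat.card_Icc, hTk] at h
        omega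
      obtain ⟨r, hrI, hrT⟩ := Finset.not_subset.mp hnsub
      rw [Finset.mem_Icc] at hrI
      have h1 : 1 ≤ 2 * (r - n) := by omega
      have h2 : 2 * (r - n) ≤ P := by omega
      have h3 : 2 * (r - n) % 2 = 0 := by omega
      have hrmin : min (n + 2 * (r - n) / 2) m = r := by
        have hdiv : 2 * (r - n) / 2 = r - n := by omega
        rw [hdiv, min_eq_left (by omega)]
        omega
      obtain ⟨hA, hz⟩ := hpadEven (2 * (r - n)) h1 h2 h3
      rw [hrmin] at hA hz
      have hterm : ∀ i ∈ T, Sp i (2 * (r - n)) = if i ≤ n then v₁ else 0 := by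
        intro i hi
        have him := Finset.mem_Icc.mp (hTm hi)
        by_cases hin : i ≤ n
        · rw [if_pos hin]
          exact hpad1 _ h1 h2 i (Finset.mem_Icc.mpr ⟨him.1, hin⟩)
        · rw [if_neg hin]
          exact hz i (by omega) him.2 (fun h => hrT (h ▸ hi))
      have hsum : ∑ i ∈ T, Sp i (2 * (r - n))
          = ((T.filter (fun i => i ≤ n)).card : ℝ) * v₁ := by
        rw [Finset.sum_congr rfl hterm, ← Finset.sum_filter, Finset.sum_const,
          nsmul_eq_mul]
      have hclt : (T.filter (fun i => i ≤ n)).card < k := by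
        rw [← hTk]
        apply Finset.card_lt_card
        rw [Finset.ssubset_iff_of_subset (Finset.filter_subset _ _)]
        exact ⟨i₀, hi₀T, fun h => absurd (Finset.mem_filter.mp h).2 (by omega)⟩
      have hcR : ((T.filter (fun i => i ≤ n)).card : ℝ) ≤ (k:ℝ) - 1 := by
        have h : ((T.filter (fun i => i ≤ n)).card : ℝ) + 1 ≤ (k:ℝ) := by
          exact_mod_cast hclt
        linarith
      have hp := hperf' (2 * (r - n)) (Finset.mem_Icc.mpr ⟨h1, by omega⟩)
      rw [hΦMeven _ h1 h2 h3] at hp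
      unfold phi1 at hp
      rw [hsum, hTk] at hp
      rw [← mul_div_assoc, div_le_div_iff₀ hBpos hkRpos] at hp
      have e1 : α * (v₁ * (F:ℝ)) * (k:ℝ) = (α * (k:ℝ) * (F:ℝ)) * v₁ := by ring
      have e2 : (((T.filter (fun i => i ≤ n)).card : ℝ) * v₁) * (B:ℝ)
          = ((T.filter (fun i => i ≤ n)).card : ℝ) * ((B:ℝ) * v₁) := by ring
      have e3 : (((k:ℝ) - 1) * (B:ℝ)) * v₁ = ((k:ℝ) - 1) * ((B:ℝ) * v₁) := by ring
      have h4 := mul_lt_mul_of_pos_right hkey hv1pos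
      have h5 := mul_le_mul_of_nonneg_right hcR (mul_pos hBpos hv1pos).le
      linarith
    refine ⟨hTn, fun t h1 h2 => ?_⟩
    have hp := hperf' t (Finset.mem_Icc.mpr ⟨by omega, h2⟩)
    rw [hΦMcode t h1 h2] at hp
    by_contra hno
    push_neg at hno
    have hzero : ∀ i ∈ T, Sp i t = 0 := by
      intro i hi
      have h := (hcode t h1 h2).1 i (hTn hi)
      by_cases hc : t - P ∈ C i
      · rw [if_pos hc] at h
        exact absurd h (hno i hi)
      · rw [if_neg hc] at h
        exact h
    have hzT : phi1 Sp T t = 0 := by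
      unfold phi1
      rw [Finset.sum_eq_zero hzero, zero_div]
    rw [hzT] at hp
    have hpos : 0 < v₁ * (F:ℝ) / (B:ℝ) := div_pos (mul_pos hv1pos hFpos) hBpos
    have := mul_pos hα hpos
    linarith
  · -- reverse direction
    rintro ⟨hTn, hcov⟩ t ht
    rw [Finset.mem_Icc] at ht
    rw [hΦT0, hΦM0, hratio]
    by_cases hcase : t ≤ P
    · rw [hΦTpad hTn t ht.1 hcase]
      rcases Nat.even_or_odd t with he | ho
      · rw [hΦMeven t ht.1 hcase (Nat.even_iff.mp he)]
        exact hkeyF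
      · rw [hΦModd t ht.1 hcase (Nat.odd_iff.mp ho)]
        exact hkey1
    · push_neg at hcase
      rw [hΦMcode t hcase ht.2]
      obtain ⟨i₀, hi₀T, hi₀v⟩ := hcov t hcase ht.2
      have hnonneg : ∀ i ∈ T, 0 ≤ Sp i t := by
        intro i hi
        have h := (hcode t hcase ht.2).1 i (hTn hi)
        rw [h]
        split <;> [exact hv2pos.le; exact le_rfl]
      have hsum : v₂ ≤ ∑ i ∈ T, Sp i t := by
        calc v₂ = Sp i₀ t := hi₀v.symm
          _ ≤ ∑ i ∈ T, Sp i t := Finset.single_le_sum hnonneg hi₀T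
      have hΦT : v₁ ≤ phi1 Sp T t := by
        unfold phi1
        rw [hTk, le_div_iff₀ hkRpos]
        calc v₁ * (k:ℝ) = v₂ := by rw [hv₂, hv₁]; ring
          _ ≤ ∑ i ∈ T, Sp i t := hsum
      exact le_trans hkeyF hΦT
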